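/- For integers p < q and N ≥ q, the number of injections from [q] to [N] whose image contains a fixed subset of [N] of cardinality p equals (q)_p · (N-p)_{q-p}, where (n)_k denotes the falling factorial n!/(n-k)!. -/
import Mathlib

namespace Stmt1Aux

variable {q N : ℕ} {S : Finset (Fin N)}

noncomputable def G (g : ↥S ↪ Fin q)
    (h : {i : Fin q // i ∉ Set.range g} ↪ {x : Fin N // x ∉ S}) :
    Fin q → Fin N :=
  fun i => if hi : ∃ s, g s = i then (hi.choose : ↥S).1 else (h ⟨i, hi⟩).1

lemma G_apply_mem (g : ↥S ↪ Fin q)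
    (h : {i : Fin q // i ∉ Set.range g} ↪ {x : Fin N // x ∉ S}) (s : ↥S) :
    G g h (g s) = s.1 := by
  have hi : ∃ s', g s' = g s := ⟨s, rfl⟩
  have : hi.choose = s := g.injective hi.choose_spec
  simp only [G, dif_pos hi, this]

lemma G_apply_not_mem (g : ↥S ↪ Fin q)
    (h : {i : Fin q // i ∉ Set.range g} ↪ {x : Fin N // x ∉ S})
    (i : Fin q) (hi : i ∉ Set.range g) :
    G g h i = (h ⟨i, hi⟩).1 := by
  exact dif_neg hi

lemma G_mem_iff (g : ↥S ↪ Fin q)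
    (h : {i : Fin q // i ∉ Set.range g} ↪ {x : Fin N // x ∉ S})
    (i : Fin q) : G g h i ∈ S ↔ i ∈ Set.range g := by
  constructor
  · intro hm
    by_contra hr
    rw [G_apply_not_mem g h i hr] at hm
    exact (h ⟨i, hr⟩).2 hm
  · rintro ⟨s, rfl⟩
    rw [G_apply_mem]
    exact s.2

lemma G_injective (g : ↥S ↪ Fin q)
    (h : {i : Fin q // i ∉ Set.range g} ↪ {x : Fin N // x ∉ S}) :
    Function.Injective (G g h) := by
  intro i j hij
  by_cases hi : i ∈ Set.range g
  · have hj : j ∈ Set.range g := by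
      rw [← G_mem_iff g h] at hi ⊢; rwa [← hij]
    obtain ⟨s, rfl⟩ := hi
    obtain ⟨t, rfl⟩ := hj
    rw [G_apply_mem, G_apply_mem] at hij
    exact congrArg g (Subtype.ext hij)
  · have hj : j ∉ Set.range g := by
      rw [← G_mem_iff g h] at hi ⊢; rwa [← hij]
    rw [G_apply_not_mem g h i hi, G_apply_not_mem g h j hj] at hij
    have := h.injective (Subtype.ext hij)
    exact congrArg Subtype.val this

noncomputable def GE (x : Σ g : ↥S ↪ Fin q,
      ({i : Fin q // i ∉ Set.range g} ↪ {x : Fin N // x ∉ S})) :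
    {f : Fin q ↪ Fin N // S ⊆ Finset.univ.map f} := by
  refine ⟨⟨G x.1 x.2, G_injective x.1 x.2⟩, ?_⟩
  intro s hs
  rw [Finset.mem_map]
  exact ⟨x.1 ⟨s, hs⟩, Finset.mem_univ _, G_apply_mem x.1 x.2 ⟨s, hs⟩⟩

lemma GE_bijective : Function.Bijective (GE (q := q) (N := N) (S := S)) := by
  constructor
  · rintro ⟨g, h⟩ ⟨g', h'⟩ he
    have hfe : ∀ i, G g h i = G g' h' i := fun i =>
      congrFun (congrArg (fun f => (f : {f : Fin q ↪ Fin N // _}).1.toFun) he) i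
    have hg : g = g' := by
      ext s
      have h1 : G g h (g s) = s.1 := G_apply_mem g h s
      have h2 : G g' h' (g' s) = s.1 := G_apply_mem g' h' s
      have : G g h (g' s) = G g h (g s) := by rw [hfe, h2, h1]
      exact congrArg Fin.val (G_injective g h this).symm
    subst hg
    have hh : h = h' := by
      ext ⟨i, hi⟩
      have h1 := G_apply_not_mem g h i hi
      have h2 := G_apply_not_mem g h' i hi
      rw [← h1, ← h2, hfe]
    subst hh
    rfl
  · rintro ⟨f, hf⟩
    have hex : ∀ s : ↥S, ∃ i, f i = s.1 := by
      intro s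
      have := hf s.2
      rw [Finset.mem_map] at this
      obtain ⟨i, _, hi⟩ := this
      exact ⟨i, hi⟩
    set g0 : ↥S → Fin q := fun s => (hex s).choose with hg0
    have hg0spec : ∀ s, f (g0 s) = s.1 := fun s => (hex s).choose_spec
    have hg0inj : Function.Injective g0 := by
      intro s t hst
      apply Subtype.ext
      rw [← hg0spec s, ← hg0spec t, hst]
    set g : ↥S ↪ Fin q := ⟨g0, hg0inj⟩ with hg
    have hnot : ∀ i : Fin q, i ∉ Set.range g → f i ∉ S := by
      intro i hi hm
      exact hi ⟨⟨f i, hm⟩, f.injective (hg0spec ⟨f i, hm⟩)⟩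
    set h : {i : Fin q // i ∉ Set.range g} ↪ {x : Fin N // x ∉ S} :=
      ⟨fun i => ⟨f i.1, hnot i.1 i.2⟩,
        fun a b hab => Subtype.ext (f.injective (congrArg Subtype.val hab))⟩ with hh
    refine ⟨⟨g, h⟩, ?_⟩
    apply Subtype.ext
    apply Function.Embedding.ext
    intro i
    by_cases hi : i ∈ Set.range g
    · obtain ⟨s, rfl⟩ := hi
      show G g h (g s) = f (g s)
      rw [G_apply_mem]
      exact (hg0spec s).symm
    · show G g h i = f i
      rw [G_apply_not_mem g h i hi]
      rfl

end Stmt1Aux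

/-- For `p < q ≤ N`, the number of injections from `[q]` to `[N]`
whose image contains a fixed subset `S ⊆ [N]` of cardinality `p` equals
`(q)_p · (N-p)_{q-p}` (falling factorials). -/
theorem stmt_1 (p q N : ℕ) (hpq : p < q) (hqN : q ≤ N)
    (S : Finset (Fin N)) (hS : S.card = p) :
    Fintype.card {f : Fin q ↪ Fin N // S ⊆ Finset.univ.map f} =
      q.descFactorial p * (N - p).descFactorial (q - p) := by
  classical
  have hcard := Fintype.card_of_bijective (Stmt1Aux.GE_bijective (q := q) (N := N) (S := S))
  rw [← hcard, Fintype.card_sigma]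
  have hSc : Fintype.card ↥S = p := by rw [Fintype.card_coe, hS]
  have hterm : ∀ g : ↥S ↪ Fin q,
      Fintype.card ({i : Fin q // i ∉ Set.range g} ↪ {x : Fin N // x ∉ S})
        = (N - p).descFactorial (q - p) := by
    intro g
    have e1 : Fintype.card {i : Fin q // i ∉ Set.range ⇑g} = q - p := by
      rw [Fintype.card_subtype_compl, Fintype.card_fin]
      congr 1
      rw [← hSc]
      exact (Fintype.card_congr (Equiv.ofInjective g g.injective)).symm
    have e2 : Fintype.card {x : Fin N // x ∉ S} = N - p := by
      rw [Fintype.card_subtype_compl, Fintype.card_fin]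
      congr 1 <;> simpa using hS
    rw [Fintype.card_embedding_eq, e1, e2]
  rw [Finset.sum_congr rfl (fun g _ => hterm g), Finset.sum_const, Finset.card_univ,
    Fintype.card_embedding_eq, hSc, Fintype.card_fin, smul_eq_mul]
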